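/- Let Γ > 0, γ > 0, let B_x, B_y : I → ℝ be continuous on an interval I ⊆ ℝ, and let ρ̃ : I → M₂(ℂ) be differentiable such that for each t ∈ I, ρ̃(t) is Hermitian with tr(ρ̃(t)) = 0 and ρ̃'(t) = i[B_x(t)σ_x + B_y(t)σ_y, ρ̃(t)] − Γ(σ_z ρ̃(t) σ_z − ρ̃(t)) + (Γ−γ)σ_z·tr(σ_z ρ̃(t)). Then the function t ↦ tr(ρ̃(t)²) is real-valued and differentiable on I with derivative d/dt tr(ρ̃(t)²) = 4Γ·tr(ρ̃(t)²) − 2γ·(tr(σ_z ρ̃(t)))². -/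

import Mathlib

open Matrix MeasureTheory Filter Set

attribute [local instance] Matrix.normedAddCommGroup Matrix.normedSpace

noncomputable def σx : Matrix (Fin 2) (Fin 2) ℂ := !![0, 1; 1, 0]
noncomputable def σy : Matrix (Fin 2) (Fin 2) ℂ := !![0, -Complex.I; Complex.I, 0]
noncomputable def σz : Matrix (Fin 2) (Fin 2) ℂ := !![1, 0; 0, -1]

/-- The matrix commutator `[A, B] = A * B - B * A`. -/
noncomputable def mcomm (A B : Matrix (Fin 2) (Fin 2) ℂ) : Matrix (Fin 2) (Fin 2) ℂ := A * B - B * A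

/-- Entry extraction as a continuous linear map. -/
noncomputable def entryCLM (i j : Fin 2) : Matrix (Fin 2) (Fin 2) ℂ →L[ℂ] ℂ :=
  LinearMap.toContinuousLinearMap
    { toFun := fun M => M i j
      map_add' := fun _ _ => rfl
      map_smul' := fun _ _ => rfl }

lemma herm10 (M : Matrix (Fin 2) (Fin 2) ℂ) (hM : M.IsHermitian) :
    M 1 0 = (starRingEnd ℂ) (M 0 1) := by
  have := congrFun (congrFun hM 1) 0
  simpa [Matrix.conjTranspose_apply] using this.symm

lemma herm11 (M : Matrix (Fin 2) (Fin 2) ℂ) (htr : M.trace = 0) :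
    M 1 1 = - M 0 0 := by
  have : M 0 0 + M 1 1 = 0 := by simpa [Matrix.trace_fin_two] using htr
  linear_combination this

lemma herm00 (M : Matrix (Fin 2) (Fin 2) ℂ) (hM : M.IsHermitian) :
    M 0 0 = ((M 0 0).re : ℂ) := by
  have := congrFun (congrFun hM 0) 0
  simp only [Matrix.conjTranspose_apply] at this
  have h := congrArg Complex.im this
  rw [Complex.star_def, Complex.conj_im] at h
  have him : (M 0 0).im = 0 := by linarith
  exact Complex.ext (by simp) (by simp [him])

set_option maxHeartbeats 1000000 in
lemma key3 (Γ γ Bx By : ℝ) (M : Matrix (Fin 2) (Fin 2) ℂ)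
    (h10 : M 1 0 = (starRingEnd ℂ) (M 0 1)) (h11 : M 1 1 = - M 0 0) :
    (((Complex.I • mcomm ((Bx:ℂ) • σx + (By:ℂ) • σy) M
        - (Γ:ℂ) • (σz * M * σz - M)
        + (((Γ:ℂ) - (γ:ℂ)) * (σz * M).trace) • σz) * M
      + M * (Complex.I • mcomm ((Bx:ℂ) • σx + (By:ℂ) • σy) M
        - (Γ:ℂ) • (σz * M * σz - M)
        + (((Γ:ℂ) - (γ:ℂ)) * (σz * M).trace) • σz)).trace)
    = 8 * Γ * (M 0 1 * (starRingEnd ℂ) (M 0 1)) + 8 * ((Γ:ℂ) - γ) * (M 0 0)^2 := by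
  simp only [Matrix.trace_fin_two, Matrix.mul_apply, Fin.sum_univ_two, Matrix.add_apply,
    Matrix.sub_apply, Matrix.smul_apply, mcomm, σx, σy, σz,
    Matrix.cons_val', Matrix.cons_val_zero, Matrix.cons_val_one, Matrix.head_cons,
    Matrix.empty_val', Matrix.cons_val_fin_one, h10, h11, smul_eq_mul]
  norm_num
  ring

lemma trace_sq (M : Matrix (Fin 2) (Fin 2) ℂ) (hM : M.IsHermitian) (htr : M.trace = 0) :
    (M * M).trace = ((2 * (M 0 0).re ^ 2 + 2 * Complex.normSq (M 0 1) : ℝ) : ℂ) := by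
  have h10 := herm10 M hM
  have h11 := herm11 M htr
  have h00 := herm00 M hM
  obtain ⟨x, hx⟩ : ∃ x : ℝ, M 0 0 = (x : ℂ) := ⟨_, h00⟩
  simp only [Matrix.trace_fin_two, Matrix.mul_apply, Fin.sum_univ_two, h10, h11, hx]
  have hc : (starRingEnd ℂ) (M 0 1) * M 0 1 = (Complex.normSq (M 0 1) : ℂ) := by
    rw [mul_comm, Complex.mul_conj]
  rw [Complex.mul_conj, hc]
  simp only [Complex.ofReal_re]
  push_cast
  ring

lemma trace_sz (M : Matrix (Fin 2) (Fin 2) ℂ) (hM : M.IsHermitian) (htr : M.trace = 0) :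
    (σz * M).trace = ((2 * (M 0 0).re : ℝ) : ℂ) := by
  have h11 := herm11 M htr
  have h00 := herm00 M hM
  obtain ⟨x, hx⟩ : ∃ x : ℝ, M 0 0 = (x : ℂ) := ⟨_, h00⟩
  simp only [Matrix.trace_fin_two, Matrix.mul_apply, Fin.sum_univ_two, σz,
    Matrix.cons_val', Matrix.cons_val_zero, Matrix.cons_val_one, Matrix.head_cons,
    Matrix.empty_val', Matrix.cons_val_fin_one, h11, hx]
  norm_num
  push_cast
  ring

/-- Lyapunov derivative along the backward error equation:
`d/dt tr(ρ̃²) = 4Γ tr(ρ̃²) − 2γ (tr(σz ρ̃))²`. -/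
theorem lyapunov_derivative_backward
    (Γ γ : ℝ) (hΓ : 0 < Γ) (hγ : 0 < γ)
    (I : Set ℝ) (hI : I.OrdConnected)
    (Bx By : ℝ → ℝ) (hBx : ContinuousOn Bx I) (hBy : ContinuousOn By I)
    (ρ ρ' : ℝ → Matrix (Fin 2) (Fin 2) ℂ)
    (hderiv : ∀ t ∈ I, HasDerivWithinAt ρ (ρ' t) I t)
    (hherm : ∀ t ∈ I, (ρ t).IsHermitian)
    (htr : ∀ t ∈ I, (ρ t).trace = 0)
    (heq : ∀ t ∈ I, ρ' t =
      Complex.I • mcomm ((Bx t : ℂ) • σx + (By t : ℂ) • σy) (ρ t)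
        - (Γ : ℂ) • (σz * ρ t * σz - ρ t)
        + (((Γ : ℂ) - (γ : ℂ)) * (σz * ρ t).trace) • σz) :
    (∀ t ∈ I, ((ρ t * ρ t).trace).im = 0) ∧
    (∀ t ∈ I, HasDerivWithinAt (fun s => ((ρ s * ρ s).trace).re)
      (4 * Γ * ((ρ t * ρ t).trace).re - 2 * γ * (((σz * ρ t).trace).re) ^ 2) I t) := by
  constructor
  · intro t ht
    rw [trace_sq (ρ t) (hherm t ht) (htr t ht)]
    exact Complex.ofReal_im _
  · intro t ht
    -- entrywise derivatives
    have e : ∀ i j : Fin 2, HasDerivWithinAt (fun s => ρ s i j) (ρ' t i j) I t := by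
      intro i j
      have := ((entryCLM i j).restrictScalars ℝ).hasFDerivAt.comp_hasDerivWithinAt t
        (hderiv t ht)
      exact this
    -- derivative of the complex trace
    have hg : HasDerivWithinAt (fun s => (ρ s * ρ s).trace)
        ((ρ' t * ρ t + ρ t * ρ' t).trace) I t := by
      have big : HasDerivWithinAt
          (fun s => ρ s 0 0 * ρ s 0 0 + ρ s 0 1 * ρ s 1 0
            + (ρ s 1 0 * ρ s 0 1 + ρ s 1 1 * ρ s 1 1))
          (ρ' t 0 0 * ρ t 0 0 + ρ t 0 0 * ρ' t 0 0
            + (ρ' t 0 1 * ρ t 1 0 + ρ t 0 1 * ρ' t 1 0)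
            + (ρ' t 1 0 * ρ t 0 1 + ρ t 1 0 * ρ' t 0 1
              + (ρ' t 1 1 * ρ t 1 1 + ρ t 1 1 * ρ' t 1 1))) I t :=
        (((e 0 0).mul (e 0 0)).add ((e 0 1).mul (e 1 0))).add
          (((e 1 0).mul (e 0 1)).add ((e 1 1).mul (e 1 1)))
      have hfun : (fun s : ℝ => (ρ s * ρ s).trace)
          = fun s => ρ s 0 0 * ρ s 0 0 + ρ s 0 1 * ρ s 1 0
            + (ρ s 1 0 * ρ s 0 1 + ρ s 1 1 * ρ s 1 1) := by
        funext s
        simp [Matrix.trace_fin_two, Matrix.mul_apply, Fin.sum_univ_two]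
      rw [hfun]
      convert big using 1
      simp [Matrix.trace_fin_two, Matrix.mul_apply, Fin.sum_univ_two]
      ring
    -- identify the complex derivative value as a real number
    set r := (ρ t 0 0).re with hr
    set n := Complex.normSq (ρ t 0 1) with hn
    have hval : (ρ' t * ρ t + ρ t * ρ' t).trace
        = ((4 * Γ * (2 * r ^ 2 + 2 * n) - 2 * γ * (2 * r) ^ 2 : ℝ) : ℂ) := by
      rw [heq t ht, Matrix.trace_add]
      have := key3 Γ γ (Bx t) (By t) (ρ t) (herm10 (ρ t) (hherm t ht))
        (herm11 (ρ t) (htr t ht))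
      rw [Matrix.trace_add] at this
      rw [this, Complex.mul_conj, herm00 (ρ t) (hherm t ht)]
      push_cast
      ring
    have hgr : HasDerivWithinAt (fun s => ((ρ s * ρ s).trace).re)
        ((4 * Γ * (2 * r ^ 2 + 2 * n) - 2 * γ * (2 * r) ^ 2 : ℝ)) I t := by
      rw [hval] at hg
      exact Complex.reCLM.hasFDerivAt.comp_hasDerivWithinAt t hg
    convert hgr using 1
    rw [trace_sq (ρ t) (hherm t ht) (htr t ht), trace_sz (ρ t) (hherm t ht) (htr t ht)]
    simp only [Complex.ofReal_re, hr, hn]
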